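/- arXiv:2505.01937 — 3 statements merged into one kernel-verified Lean document; each statement's English description precedes it below -/
import Mathlib

section
/- For any real number q > 1 and any α ≥ 0, it holds that (1+α)^q / (1+qα) ≤ exp(q(q-1)α²/2). -/
theorem stmt0 (q α : ℝ) (hq : 1 < q) (hα : 0 ≤ α) :
    (1 + α) ^ q / (1 + q * α) ≤ Real.exp (q * (q - 1) * α ^ 2 / 2) := by
  have hq0 : 0 < q := lt_trans one_pos hq
  have hB : ∀ x : ℝ, 0 ≤ x → (0:ℝ) < 1 + x := fun x hx => by linarith
  have hA : ∀ x : ℝ, 0 ≤ x → (0:ℝ) < 1 + q * x := fun x hx => by nlinarith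
  set f : ℝ → ℝ := fun x => q*(q-1)*x^2/2 + Real.log (1+q*x) - q * Real.log (1+x)
    with hf
  have hderiv : ∀ x : ℝ, 0 ≤ x →
      HasDerivAt f (q*(q-1)*x + q/(1+q*x) - q*(1/(1+x))) x := by
    intro x hx
    have h1 : HasDerivAt (fun x : ℝ => q*(q-1)*x^2/2) (q*(q-1)*x) x := by
      have := ((hasDerivAt_pow 2 x).const_mul (q*(q-1))).div_const 2
      refine this.congr_deriv ?_
      norm_num
      ring
    have h2 : HasDerivAt (fun x : ℝ => Real.log (1+q*x)) (q/(1+q*x)) x := by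
      have harg : HasDerivAt (fun x : ℝ => 1+q*x) q x := by
        simpa using ((hasDerivAt_id x).const_mul q).const_add 1
      have := (Real.hasDerivAt_log (ne_of_gt (hA x hx))).comp x harg
      simpa [div_eq_mul_inv, mul_comm, Function.comp_def] using this
    have h3 : HasDerivAt (fun x : ℝ => q * Real.log (1+x)) (q*(1/(1+x))) x := by
      have harg : HasDerivAt (fun x : ℝ => 1+x) 1 x := by
        simpa using (hasDerivAt_id x).const_add 1
      have := ((Real.hasDerivAt_log (ne_of_gt (hB x hx))).comp x harg).const_mul q
      simpa [div_eq_mul_inv] using this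
    exact (h1.add h2).sub h3
  have hmono : MonotoneOn f (Set.Ici (0:ℝ)) := by
    apply monotoneOn_of_deriv_nonneg (convex_Ici 0)
    · exact fun x hx => ((hderiv x hx).continuousAt).continuousWithinAt
    · intro x hx
      rw [interior_Ici] at hx
      exact ((hderiv x (le_of_lt hx)).differentiableAt).differentiableWithinAt
    · intro x hx
      rw [interior_Ici] at hx
      rw [(hderiv x (le_of_lt hx)).deriv]
      have hx' : (0:ℝ) < x := hx
      have hAx := hA x (le_of_lt hx)
      have hBx := hB x (le_of_lt hx)
      have hdiff : q/(1+q*x) - q*(1/(1+x)) = -((q*(q-1)*x)/((1+q*x)*(1+x))) := by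
        field_simp
        ring
      have hAB : (1:ℝ) ≤ (1+q*x)*(1+x) := by nlinarith
      have h1 : 0 ≤ q*(q-1)*x := le_of_lt (mul_pos (mul_pos hq0 (by linarith)) hx')
      have := div_le_self h1 hAB
      linarith [hdiff]
  have hf0 : f 0 = 0 := by simp [hf]
  have key : 0 ≤ f α := by
    have := hmono (Set.self_mem_Ici) (Set.mem_Ici.mpr hα) hα
    rw [hf0] at this
    exact this
  have hlog : q * Real.log (1+α) ≤ q*(q-1)*α^2/2 + Real.log (1+q*α) := by
    simp only [hf] at key
    linarith
  rw [div_le_iff₀ (hA α hα), Real.rpow_def_of_pos (hB α hα),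
    ← Real.exp_log (hA α hα), ← Real.exp_add, Real.exp_le_exp]
  linarith
end

section
/- For real numbers q > 1, δ > 0 with 1 - qδ > 0, and any α ∈ [-δ/2, 0], it holds that (1+α)^q / (1+qα) ≤ exp(q(q-1)α²/(2(1-qδ))). -/
theorem stmt1 (q δ α : ℝ) (hq : 1 < q) (hδ : 0 < δ) (h1 : 0 < 1 - q * δ)
    (hα₁ : -δ / 2 ≤ α) (hα₂ : α ≤ 0) :
    (1 + α) ^ q / (1 + q * α) ≤ Real.exp (q * (q - 1) * α ^ 2 / (2 * (1 - q * δ))) := by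
  have hq0 : 0 < q := by linarith
  set C : ℝ := q * (q - 1) / (2 * (1 - q * δ)) with hC
  -- basic positivity on the interval
  have hmem : ∀ x ∈ Set.Icc (-δ/2) 0, 0 < 1 + x ∧ 0 < 1 + q * x := by
    intro x hx
    obtain ⟨hx1, hx2⟩ := hx
    constructor <;> nlinarith
  set g : ℝ → ℝ := fun x => C * x ^ 2 - q * Real.log (1 + x) + Real.log (1 + q * x) with hg
  have hderiv : ∀ x ∈ Set.Icc (-δ/2) 0,
      HasDerivAt g (2 * C * x - q * (1 / (1 + x)) + q * (1 / (1 + q * x))) x := by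
    intro x hx
    obtain ⟨h1x, h1qx⟩ := hmem x hx
    have d1 : HasDerivAt (fun x : ℝ => C * x ^ 2) (C * (2 * x)) x := by
      simpa using (hasDerivAt_pow 2 x).const_mul C
    have d2 : HasDerivAt (fun x : ℝ => Real.log (1 + x)) (1 / (1 + x)) x := by
      simpa using ((hasDerivAt_id x).const_add 1).log (ne_of_gt h1x)
    have d3 : HasDerivAt (fun x : ℝ => Real.log (1 + q * x)) (q / (1 + q * x)) x := by
      simpa using (((hasDerivAt_id x).const_mul q).const_add 1).log (ne_of_gt h1qx)
    have := (d1.sub (d2.const_mul q)).add d3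
    exact this.congr_deriv (by ring)
  have hanti : AntitoneOn g (Set.Icc (-δ/2) 0) := by
    apply antitoneOn_of_deriv_nonpos (convex_Icc _ _)
    · intro x hx
      exact (hderiv x hx).continuousAt.continuousWithinAt
    · intro x hx
      rw [interior_Icc] at hx
      exact ((hderiv x (Set.mem_Icc_of_Ioo hx)).differentiableAt).differentiableWithinAt
    · intro x hx
      rw [interior_Icc] at hx
      have hxI : x ∈ Set.Icc (-δ/2) 0 := Set.mem_Icc_of_Ioo hx
      obtain ⟨h1x, h1qx⟩ := hmem x hxI
      rw [(hderiv x hxI).deriv]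
      have hxle : x ≤ 0 := le_of_lt hx.2
      have key : 1 - q * δ ≤ (1 + x) * (1 + q * x) := by
        nlinarith [hxI.1, mul_le_mul_of_nonneg_left hxI.1 (by linarith : (0:ℝ) ≤ 1 + q), mul_nonneg (le_of_lt hq0) (sq_nonneg x)]
      have t1 : 1 / ((1 + x) * (1 + q * x)) ≤ 1 / (1 - q * δ) :=
        one_div_le_one_div_of_le h1 key
      have e : q * (1 / (1 + q * x)) - q * (1 / (1 + x))
          = (q * (q - 1) * x) * (-(1 / ((1 + x) * (1 + q * x)))) := by
        field_simp
        ring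
      have hfac : q * (q - 1) * x ≤ 0 := mul_nonpos_of_nonneg_of_nonpos (by nlinarith) hxle
      have t2 : (q * (q - 1) * x) * (1 / (1 - q * δ))
          ≤ (q * (q - 1) * x) * (1 / ((1 + x) * (1 + q * x))) :=
        mul_le_mul_of_nonpos_left t1 hfac
      have h2C : 2 * C * x = (q * (q - 1) * x) * (1 / (1 - q * δ)) := by
        rw [hC]; field_simp
      nlinarith [t2, e, h2C]
  have h0mem : (0:ℝ) ∈ Set.Icc (-δ/2) 0 := by constructor <;> linarith
  have hαmem : α ∈ Set.Icc (-δ/2) 0 := ⟨hα₁, hα₂⟩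
  have hg0 : g 0 = 0 := by simp [hg]
  have hgα : 0 ≤ g α := by
    have := hanti hαmem h0mem hα₂
    rw [hg0] at this
    exact this
  obtain ⟨h1α, h1qα⟩ := hmem α hαmem
  have hlog : q * Real.log (1 + α) - Real.log (1 + q * α) ≤ C * α ^ 2 := by
    simp only [hg] at hgα; linarith
  have hpow : (1 + α) ^ q = Real.exp (q * Real.log (1 + α)) := by
    rw [Real.rpow_def_of_pos h1α]; ring_nf
  have hden : (1 + q * α) = Real.exp (Real.log (1 + q * α)) := (Real.exp_log h1qα).symm
  rw [hpow]
  conv_lhs => rw [hden]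
  rw [← Real.exp_sub]
  apply Real.exp_le_exp.mpr
  calc q * Real.log (1 + α) - Real.log (1 + q * α) ≤ C * α ^ 2 := hlog
    _ = q * (q - 1) * α ^ 2 / (2 * (1 - q * δ)) := by rw [hC]; ring
end

section
/- Let π be a probability measure on ℝⁿ satisfying a Poincaré inequality with constant C_PI. Then for every 1-Lipschitz function f : ℝⁿ → ℝ and every t ≥ 0, π(f - E_π f ≥ t) ≤ 3 exp(-t / C_PI^{1/2}). -/
open MeasureTheory Filter ContinuousLinearMap
open scoped Convolution Topology

lemma aux_integrable_of_bdd {n : ℕ} {π : Measure (EuclideanSpace ℝ (Fin n))}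
    [IsFiniteMeasure π] {f : EuclideanSpace ℝ (Fin n) → ℝ} (hf : Continuous f) (C : ℝ)
    (hC : ∀ x, |f x| ≤ C) : Integrable f π :=
  Integrable.mono' (integrable_const C) hf.aestronglyMeasurable
    (Filter.Eventually.of_forall fun x => by simpa [Real.norm_eq_abs] using hC x)

lemma aux_mollify {n : ℕ} (f : EuclideanSpace ℝ (Fin n) → ℝ) (hf : LipschitzWith 1 f)
    (ε : ℝ) (hε : 0 < ε) :
    ∃ g : EuclideanSpace ℝ (Fin n) → ℝ, ContDiff ℝ (⊤ : ℕ∞) g ∧ LipschitzWith 1 g ∧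
      ∀ x, |g x - f x| ≤ ε := by
  set φ : ContDiffBump (0 : EuclideanSpace ℝ (Fin n)) := ⟨ε/2, ε, half_pos hε, half_lt_self hε⟩
  refine ⟨φ.normed volume ⋆[lsmul ℝ ℝ, volume] f, ?_, ?_, ?_⟩
  · exact (φ.hasCompactSupport_normed (μ := volume)).contDiff_convolution_left (n := ⊤) (lsmul ℝ ℝ) (φ.contDiff_normed (μ := volume))
      (hf.continuous.locallyIntegrable (μ := volume))
  · have hint : ∀ z : EuclideanSpace ℝ (Fin n),
        Integrable (fun t => φ.normed volume t • f (z - t)) volume := by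
      intro z
      apply Continuous.integrable_of_hasCompactSupport
      · exact φ.continuous_normed.smul (hf.continuous.comp (continuous_const.sub continuous_id))
      · exact φ.hasCompactSupport_normed.smul_right
    refine LipschitzWith.of_dist_le_mul fun x y => ?_
    have h1 : dist ((φ.normed volume ⋆[lsmul ℝ ℝ, volume] f) x) ((φ.normed volume ⋆[lsmul ℝ ℝ, volume] f) y)
        = ‖∫ t, (φ.normed volume t • f (x - t) - φ.normed volume t • f (y - t)) ∂volume‖ := by
      rw [dist_eq_norm, convolution_lsmul, convolution_lsmul, integral_sub (hint x) (hint y)]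
    rw [h1]
    have h2 : ∀ t, ‖φ.normed volume t • f (x - t) - φ.normed volume t • f (y - t)‖
        ≤ φ.normed volume t * dist x y := by
      intro t
      rw [← smul_sub, norm_smul, Real.norm_eq_abs, abs_of_nonneg (φ.nonneg_normed t)]
      refine mul_le_mul_of_nonneg_left ?_ (φ.nonneg_normed t)
      calc ‖f (x - t) - f (y - t)‖ = dist (f (x - t)) (f (y - t)) := (dist_eq_norm _ _).symm
        _ ≤ 1 * dist (x - t) (y - t) := hf.dist_le_mul _ _
        _ = dist x y := by rw [one_mul, dist_sub_right]
    calc ‖∫ t, (φ.normed volume t • f (x - t) - φ.normed volume t • f (y - t)) ∂volume‖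
        ≤ ∫ t, φ.normed volume t * dist x y ∂volume := by
          refine (norm_integral_le_integral_norm _).trans ?_
          exact integral_mono ((hint x).sub (hint y)).norm
            ((φ.integrable_normed).mul_const _) h2
      _ = 1 * dist x y := by rw [integral_mul_const, φ.integral_normed]
      _ = ↑(1 : NNReal) * dist x y := by norm_num
  · intro x
    have := φ.dist_normed_convolution_le (μ := volume) (hf.continuous.aestronglyMeasurable)
      (x₀ := x) (ε := ε) ?_
    · rwa [Real.dist_eq] at this
    · intro y hy
      calc dist (f y) (f x) ≤ 1 * dist y x := hf.dist_le_mul _ _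
        _ ≤ ε := by
            rw [one_mul]
            exact le_of_lt (by simpa [Metric.mem_ball] using hy)

lemma aux_var {n : ℕ} {π : Measure (EuclideanSpace ℝ (Fin n))} [IsProbabilityMeasure π]
    (f : EuclideanSpace ℝ (Fin n) → ℝ) (h1 : Integrable f π)
    (h2 : Integrable (fun x => f x ^ 2) π) :
    ∫ x, (f x - ∫ y, f y ∂π) ^ 2 ∂π = (∫ x, f x ^ 2 ∂π) - (∫ x, f x ∂π) ^ 2 := by
  set c := ∫ y, f y ∂π with hc
  have e1 : ∀ x, (f x - c) ^ 2 = f x ^ 2 - (2 * c) * f x + c ^ 2 := fun x => by ring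
  calc ∫ x, (f x - c) ^ 2 ∂π = ∫ x, (f x ^ 2 - (2 * c) * f x + c ^ 2) ∂π :=
        integral_congr_ae (Filter.Eventually.of_forall fun x => e1 x)
    _ = (∫ x, (f x ^ 2 - (2 * c) * f x) ∂π) + ∫ _x, c ^ 2 ∂π :=
        integral_add (h2.sub (h1.const_mul _)) (integrable_const _)
    _ = (∫ x, f x ^ 2 ∂π) - (2 * c) * (∫ x, f x ∂π) + c ^ 2 := by
        rw [integral_sub h2 (h1.const_mul _), integral_const_mul]
        simp
    _ = (∫ x, f x ^ 2 ∂π) - c ^ 2 := by rw [← hc]; ring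

set_option maxHeartbeats 1000000 in
lemma aux_herbst (n : ℕ) (π : Measure (EuclideanSpace ℝ (Fin n))) [IsProbabilityMeasure π]
    (Cpi : ℝ) (hCpi : 0 < Cpi)
    (hPI : ∀ f : EuclideanSpace ℝ (Fin n) → ℝ, Differentiable ℝ f →
      Integrable f π → Integrable (fun x => f x ^ 2) π →
      Integrable (fun x => ‖fderiv ℝ f x‖ ^ 2) π →
      ∫ x, (f x - ∫ y, f y ∂π) ^ 2 ∂π ≤ Cpi * ∫ x, ‖fderiv ℝ f x‖ ^ 2 ∂π)
    (g : EuclideanSpace ℝ (Fin n) → ℝ) (hg : ContDiff ℝ (⊤ : ℕ∞) g)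
    (hlip : LipschitzWith 1 g) (M : ℝ) (hM : 0 ≤ M) (hbd : ∀ x, |g x| ≤ M) :
    ∫ x, Real.exp ((Real.sqrt Cpi)⁻¹ * g x) ∂π ≤
      Real.exp (1 + (Real.sqrt Cpi)⁻¹ * ∫ x, g x ∂π) := by
  have hsq : 0 < Real.sqrt Cpi := Real.sqrt_pos.2 hCpi
  set lam : ℝ := (Real.sqrt Cpi)⁻¹ with hlamdef
  have hlam : 0 < lam := inv_pos.2 hsq
  have hlam2 : Cpi * lam ^ 2 = 1 := by
    rw [hlamdef, inv_pow, ← Real.sq_sqrt hCpi.le]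
    field_simp
    rw [Real.sqrt_sq hsq.le]
  have hgd : Differentiable ℝ g := hg.differentiable (by simp)
  have hgc : Continuous g := hgd.continuous
  have hgderiv : Continuous fun x => fderiv ℝ g x :=
    hg.continuous_fderiv (by simp)
  have hgnorm : ∀ x, ‖fderiv ℝ g x‖ ≤ 1 := by
    intro x
    simpa using norm_fderiv_le_of_lipschitz ℝ hlip (x₀ := x)
  -- the family of exponentials
  set A : ℕ → ℝ := fun k => ∫ x, Real.exp (lam * (2:ℝ)⁻¹ ^ k * g x) ∂π with hA
  have hc_pos : ∀ k : ℕ, 0 < lam * (2:ℝ)⁻¹ ^ k := fun k => by positivity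
  have hc_le : ∀ k : ℕ, lam * (2:ℝ)⁻¹ ^ k ≤ lam := fun k => by
    nth_rewrite 2 [← mul_one lam]
    exact mul_le_mul_of_nonneg_left (pow_le_one₀ (by norm_num) (by norm_num)) hlam.le
  have hptbd : ∀ k : ℕ, ∀ x, |Real.exp (lam * (2:ℝ)⁻¹ ^ k * g x)| ≤ Real.exp (lam * M) := by
    intro k x
    rw [abs_of_pos (Real.exp_pos _), Real.exp_le_exp]
    calc lam * (2:ℝ)⁻¹ ^ k * g x ≤ lam * (2:ℝ)⁻¹ ^ k * M :=
          mul_le_mul_of_nonneg_left ((abs_le.1 (hbd x)).2) (hc_pos k).le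
      _ ≤ lam * M := mul_le_mul_of_nonneg_right (hc_le k) hM
  have hcont : ∀ k : ℕ, Continuous fun x => Real.exp (lam * (2:ℝ)⁻¹ ^ k * g x) := fun k =>
    Real.continuous_exp.comp (continuous_const.mul hgc)
  have hint : ∀ k : ℕ, Integrable (fun x => Real.exp (lam * (2:ℝ)⁻¹ ^ k * g x)) π := fun k =>
    aux_integrable_of_bdd (hcont k) _ (hptbd k)
  have hApos : ∀ k : ℕ, 0 < A k := by
    intro k
    have h1 : ∀ x, Real.exp (-(lam * M)) ≤ Real.exp (lam * (2:ℝ)⁻¹ ^ k * g x) := by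
      intro x
      rw [Real.exp_le_exp]
      have := (abs_le.1 (hbd x)).1
      calc -(lam * M) ≤ -(lam * (2:ℝ)⁻¹ ^ k * M) := by
            rw [neg_le_neg_iff]
            exact mul_le_mul_of_nonneg_right (hc_le k) hM
        _ ≤ lam * (2:ℝ)⁻¹ ^ k * g x := by nlinarith [hc_pos k]
    calc (0:ℝ) < Real.exp (-(lam * M)) := Real.exp_pos _
      _ = ∫ _x, Real.exp (-(lam * M)) ∂π := by simp
      _ ≤ A k := integral_mono (integrable_const _) (hint k) h1
  have hAnn : ∀ k : ℕ, 0 ≤ A k := fun k => (hApos k).le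
  -- key one-step inequality
  have key : ∀ k : ℕ, A k ≤ Real.exp (2 * (4:ℝ)⁻¹ ^ (k+1)) * A (k+1) ^ 2 := by
    intro k
    set c : ℝ := lam * (2:ℝ)⁻¹ ^ (k+1) with hcdef
    have hc0 : 0 < c := hc_pos (k+1)
    set F : EuclideanSpace ℝ (Fin n) → ℝ := fun x => Real.exp (c * g x) with hF
    have hsqF : ∀ x, F x ^ 2 = Real.exp (lam * (2:ℝ)⁻¹ ^ k * g x) := by
      intro x
      rw [hF, ← Real.exp_nat_mul]
      congr 1
      push_cast
      rw [hcdef, pow_succ]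
      ring
    have hFd : ∀ x, HasFDerivAt F (Real.exp (c * g x) • (c • fderiv ℝ g x)) x := by
      intro x
      exact ((hgd x).hasFDerivAt.const_mul c).exp
    have hFdiff : Differentiable ℝ F := fun x => (hFd x).differentiableAt
    have hFderiv : ∀ x, fderiv ℝ F x = Real.exp (c * g x) • (c • fderiv ℝ g x) := fun x =>
      (hFd x).fderiv
    have hFnormbd : ∀ x, ‖fderiv ℝ F x‖ ^ 2 ≤ c ^ 2 * Real.exp (lam * (2:ℝ)⁻¹ ^ k * g x) := by
      intro x
      rw [hFderiv x, ← hsqF x, hF]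
      have h1 : ‖Real.exp (c * g x) • (c • fderiv ℝ g x)‖ ≤ Real.exp (c * g x) * c := by
        rw [norm_smul, norm_smul, Real.norm_eq_abs, Real.norm_eq_abs,
          abs_of_pos (Real.exp_pos _), abs_of_pos hc0, mul_assoc]
        refine mul_le_mul_of_nonneg_left ?_ (Real.exp_pos _).le
        nth_rewrite 2 [← mul_one c]
        exact mul_le_mul_of_nonneg_left (hgnorm x) hc0.le
      calc ‖Real.exp (c * g x) • (c • fderiv ℝ g x)‖ ^ 2 ≤ (Real.exp (c * g x) * c) ^ 2 := by
            have := norm_nonneg (Real.exp (c * g x) • (c • fderiv ℝ g x))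
            nlinarith
        _ = c ^ 2 * (fun x => Real.exp (c * g x)) x ^ 2 := by ring
    have hFcont : Continuous F := Real.continuous_exp.comp (continuous_const.mul hgc)
    have hFint : Integrable F π := hint (k+1)
    have hF2int : Integrable (fun x => F x ^ 2) π := by
      have : (fun x => F x ^ 2) = fun x => Real.exp (lam * (2:ℝ)⁻¹ ^ k * g x) := funext hsqF
      rw [this]; exact hint k
    have hFdint : Integrable (fun x => ‖fderiv ℝ F x‖ ^ 2) π := by
      refine aux_integrable_of_bdd ?_ (c ^ 2 * Real.exp (lam * M)) ?_
      · have : Continuous fun x => fderiv ℝ F x := by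
          simp_rw [funext hFderiv]
          exact (Real.continuous_exp.comp (continuous_const.mul hgc)).smul
            (hgderiv.const_smul c)
        exact (this.norm.pow 2)
      · intro x
        rw [abs_of_nonneg (by positivity)]
        refine (hFnormbd x).trans ?_
        have h2 := hptbd k x
        rw [abs_of_pos (Real.exp_pos _)] at h2
        exact mul_le_mul_of_nonneg_left h2 (by positivity)
    have hPIF := hPI F hFdiff hFint hF2int hFdint
    rw [aux_var F hFint hF2int] at hPIF
    have hIntF2 : ∫ x, F x ^ 2 ∂π = A k := by
      rw [hA]
      exact integral_congr_ae (Filter.Eventually.of_forall fun x => hsqF x)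
    have hIntF : ∫ x, F x ∂π = A (k+1) := rfl
    rw [hIntF2, hIntF] at hPIF
    -- bound the Dirichlet form
    have hDir : ∫ x, ‖fderiv ℝ F x‖ ^ 2 ∂π ≤ c ^ 2 * A k := by
      calc ∫ x, ‖fderiv ℝ F x‖ ^ 2 ∂π ≤ ∫ x, c ^ 2 * Real.exp (lam * (2:ℝ)⁻¹ ^ k * g x) ∂π :=
            integral_mono hFdint ((hint k).const_mul _) hFnormbd
        _ = c ^ 2 * A k := integral_const_mul _ _
    have h4pow : ((2:ℝ)⁻¹ ^ (k+1)) ^ 2 = (4:ℝ)⁻¹ ^ (k+1) := by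
      have h4 : ((2:ℝ)⁻¹) ^ 2 = (4:ℝ)⁻¹ := by norm_num
      rw [← pow_mul, mul_comm, pow_mul, h4]
    have hq : Cpi * c ^ 2 = (4:ℝ)⁻¹ ^ (k+1) := by
      rw [hcdef, mul_pow, ← mul_assoc, hlam2, one_mul, h4pow]
    set q : ℝ := (4:ℝ)⁻¹ ^ (k+1) with hqdef
    have hq0 : 0 < q := by positivity
    have hq2 : q ≤ 1/2 := by
      calc q ≤ (4:ℝ)⁻¹ ^ 1 := pow_le_pow_of_le_one (by norm_num) (by norm_num) (by omega)
        _ ≤ 1/2 := by norm_num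
    have hchain : A k - A (k+1) ^ 2 ≤ q * A k := by
      refine hPIF.trans ?_
      calc Cpi * ∫ x, ‖fderiv ℝ F x‖ ^ 2 ∂π ≤ Cpi * (c ^ 2 * A k) :=
            mul_le_mul_of_nonneg_left hDir hCpi.le
        _ = q * A k := by rw [← hq]; ring
    have hexp : 1 + 2 * q ≤ Real.exp (2 * q) := by
      have := Real.add_one_le_exp (2 * q)
      linarith
    have h1 : (1 - q) * A k ≤ A (k+1) ^ 2 := by nlinarith [hApos k]
    have h2 : 0 ≤ (1 - q) * A k := mul_nonneg (by linarith) (hApos k).le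
    have h3 : (1 + 2*q) * ((1-q) * A k) ≤ Real.exp (2*q) * A (k+1) ^ 2 :=
      mul_le_mul hexp h1 h2 (Real.exp_pos _).le
    have h4 : A k ≤ (1 + 2*q) * ((1-q) * A k) := by
      nlinarith [mul_nonneg (mul_nonneg hq0.le (by linarith : (0:ℝ) ≤ 1 - 2*q)) (hApos k).le]
    linarith
  -- iterate the one-step inequality
  have main : ∀ N : ℕ, A 0 ≤ Real.exp (∑ k ∈ Finset.range N, (2:ℝ)⁻¹ ^ (k+1)) * A N ^ (2^N) := by
    intro N
    induction N with
    | zero => simp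
    | succ N ih =>
      refine ih.trans ?_
      have h1 : A N ^ (2^N) ≤ (Real.exp (2 * (4:ℝ)⁻¹ ^ (N+1)) * A (N+1) ^ 2) ^ (2^N) :=
        pow_le_pow_left₀ (hAnn N) (key N) _
      have h2 : (Real.exp (2 * (4:ℝ)⁻¹ ^ (N+1)) * A (N+1) ^ 2) ^ (2^N)
          = Real.exp ((2:ℝ)⁻¹ ^ (N+1)) * A (N+1) ^ (2^(N+1)) := by
        rw [mul_pow, ← pow_mul, ← Real.exp_nat_mul]
        congr 2
        · push_cast
          have e : (2:ℝ)^N * (2 * (4:ℝ)⁻¹^(N+1)) = (2:ℝ)^(N+1) * (4:ℝ)⁻¹^(N+1) := by ring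
          rw [e, ← mul_pow]
          norm_num
        · rw [pow_succ]
          ring
      calc Real.exp (∑ k ∈ Finset.range N, (2:ℝ)⁻¹ ^ (k+1)) * A N ^ (2^N)
          ≤ Real.exp (∑ k ∈ Finset.range N, (2:ℝ)⁻¹ ^ (k+1)) *
            (Real.exp ((2:ℝ)⁻¹ ^ (N+1)) * A (N+1) ^ (2^(N+1))) :=
            mul_le_mul_of_nonneg_left (h1.trans_eq h2) (Real.exp_pos _).le
        _ = Real.exp (∑ k ∈ Finset.range (N+1), (2:ℝ)⁻¹ ^ (k+1)) * A (N+1) ^ (2^(N+1)) := by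
            rw [Finset.sum_range_succ, Real.exp_add]
            ring
  set I := ∫ x, g x ∂π with hI
  have hgint : Integrable g π := aux_integrable_of_bdd hgc M hbd
  -- tail bound
  have tailbd : ∀ N : ℕ, (2:ℝ)⁻¹ ^ N * (lam * M) ≤ 1 →
      A N ^ (2^N) ≤ Real.exp (lam * I + (2:ℝ)⁻¹ ^ N * (lam*M)^2) := by
    intro N hN
    set s : ℝ := (2:ℝ)⁻¹ ^ N with hs
    have hs0 : 0 < s := by positivity
    have hlamM : 0 ≤ lam * M := mul_nonneg hlam.le hM
    have hpt : ∀ x, Real.exp (lam * s * g x) ≤ 1 + lam * s * g x + s^2 * (lam*M)^2 := by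
      intro x
      have hyb : |lam * s * g x| ≤ s * (lam * M) := by
        rw [abs_mul, abs_mul, abs_of_pos hlam, abs_of_pos hs0]
        calc lam * s * |g x| ≤ lam * s * M :=
              mul_le_mul_of_nonneg_left (hbd x) (by positivity)
          _ = s * (lam * M) := by ring
      have hy1 : |lam * s * g x| ≤ 1 := hyb.trans hN
      have hb := Real.exp_bound hy1 (n := 2) (by norm_num)
      have hsum : ∑ m ∈ Finset.range 2, (lam * s * g x) ^ m / m.factorial
          = 1 + lam * s * g x := by
        simp [Finset.sum_range_succ, Nat.factorial]
      rw [hsum] at hb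
      have hb1 := (abs_sub_le_iff.1 hb).1
      have hy2 : |lam * s * g x| ^ 2 ≤ (s * (lam * M)) ^ 2 :=
        pow_le_pow_left₀ (abs_nonneg _) hyb 2
      have hsq : |lam * s * g x| ^ 2 = (lam * s * g x) ^ 2 := sq_abs _
      have hC : ((Nat.succ 2 : ℕ) : ℝ) / ((Nat.factorial 2 : ℕ) * ((2:ℕ):ℝ)) ≤ 1 := by
        norm_num [Nat.factorial]
      have hb2 : Real.exp (lam * s * g x) - (1 + lam * s * g x) ≤ |lam * s * g x| ^ 2 :=
        hb1.trans (mul_le_of_le_one_right (sq_nonneg _) hC)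
      linarith [hb2, hy2, hsq]
    have hAN : A N ≤ 1 + lam * s * I + s^2 * (lam*M)^2 := by
      have i1 : Integrable (fun x => 1 + lam * s * g x) π :=
        (integrable_const (1:ℝ)).add (hgint.const_mul (lam * s))
      have hintegr : Integrable (fun x => 1 + lam * s * g x + s^2 * (lam*M)^2) π :=
        i1.add (integrable_const _)
      calc A N = ∫ x, Real.exp (lam * s * g x) ∂π := by simp only [hA, hs]
        _ ≤ ∫ x, (1 + lam * s * g x + s^2 * (lam*M)^2) ∂π :=
            integral_mono (hint N) hintegr hpt
        _ = 1 + lam * s * I + s^2 * (lam*M)^2 := by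
            rw [integral_add i1 (integrable_const _), integral_add (integrable_const (1:ℝ))
              (hgint.const_mul (lam * s)), integral_const_mul]
            simp [hI]
    have hexpAN : A N ≤ Real.exp (lam * s * I + s^2 * (lam*M)^2) := by
      have := Real.add_one_le_exp (lam * s * I + s^2 * (lam*M)^2)
      linarith
    have hps : (2:ℝ)^N * s = 1 := by
      rw [hs, ← mul_pow]
      norm_num
    have harg : (2:ℝ)^N * (lam * s * I + s^2 * (lam*M)^2) = lam * I + s * (lam*M)^2 := by
      calc (2:ℝ)^N * (lam * s * I + s^2 * (lam*M)^2)
          = ((2:ℝ)^N * s) * (lam * I) + ((2:ℝ)^N * s) * (s * (lam*M)^2) := by ring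
        _ = lam * I + s * (lam*M)^2 := by rw [hps]; ring
    calc A N ^ (2^N) ≤ Real.exp (lam * s * I + s^2 * (lam*M)^2) ^ (2^N) :=
          pow_le_pow_left₀ (hAnn N) hexpAN _
      _ = Real.exp (lam * I + s * (lam*M)^2) := by
          rw [← Real.exp_nat_mul]
          congr 1
          push_cast
          exact harg
  -- conclude by letting N → ∞
  have hev : ∀ᶠ N : ℕ in Filter.atTop, (2:ℝ)⁻¹ ^ N * (lam * M) ≤ 1 := by
    have h0 : Tendsto (fun N : ℕ => (2:ℝ)⁻¹ ^ N * (lam * M)) atTop (𝓝 0) := by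
      simpa using (tendsto_pow_atTop_nhds_zero_of_lt_one (by norm_num : (0:ℝ) ≤ 2⁻¹)
        (by norm_num : (2:ℝ)⁻¹ < 1)).mul_const (lam * M)
    exact h0.eventually (eventually_le_nhds (by norm_num))
  have hfin : ∀ᶠ N : ℕ in Filter.atTop,
      ∫ x, Real.exp (lam * g x) ∂π ≤ Real.exp (1 + lam * I + (2:ℝ)⁻¹^N * (lam*M)^2) := by
    filter_upwards [hev] with N hN
    have hA0 : ∫ x, Real.exp (lam * g x) ∂π = A 0 := by simp [hA]
    rw [hA0]
    have hS : ∑ k ∈ Finset.range N, (2:ℝ)⁻¹ ^ (k+1) ≤ 1 := by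
      calc ∑ k ∈ Finset.range N, (2:ℝ)⁻¹^(k+1) = 2⁻¹ * ∑ k ∈ Finset.range N, (2:ℝ)⁻¹^k := by
            rw [Finset.mul_sum]
            exact Finset.sum_congr rfl fun k _ => by rw [pow_succ]; ring
        _ ≤ 2⁻¹ * 2 := by
            refine mul_le_mul_of_nonneg_left ?_ (by norm_num)
            simpa [one_div] using sum_geometric_two_le N
        _ = 1 := by norm_num
    calc A 0 ≤ Real.exp (∑ k ∈ Finset.range N, (2:ℝ)⁻¹ ^ (k+1)) * A N ^ (2^N) := main N
      _ ≤ Real.exp 1 * Real.exp (lam * I + (2:ℝ)⁻¹^N * (lam*M)^2) :=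
          mul_le_mul (Real.exp_le_exp.2 hS) (tailbd N hN) (pow_nonneg (hAnn N) _)
            (Real.exp_pos _).le
      _ = Real.exp (1 + lam * I + (2:ℝ)⁻¹^N * (lam*M)^2) := by
          rw [← Real.exp_add]
          ring_nf
  have hlimit : Tendsto (fun N : ℕ => Real.exp (1 + lam * I + (2:ℝ)⁻¹^N * (lam*M)^2)) atTop
      (𝓝 (Real.exp (1 + lam * I + 0 * (lam*M)^2))) := by
    refine (Real.continuous_exp.tendsto _).comp ?_
    exact tendsto_const_nhds.add ((tendsto_pow_atTop_nhds_zero_of_lt_one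
      (by norm_num : (0:ℝ) ≤ 2⁻¹) (by norm_num : (2:ℝ)⁻¹ < 1)).mul_const _)
  have hfinal := ge_of_tendsto hlimit hfin
  simpa using hfinal

lemma aux_markov (n : ℕ) (π : Measure (EuclideanSpace ℝ (Fin n))) [IsProbabilityMeasure π]
    (Cpi : ℝ) (hCpi : 0 < Cpi)
    (hPI : ∀ f : EuclideanSpace ℝ (Fin n) → ℝ, Differentiable ℝ f →
      Integrable f π → Integrable (fun x => f x ^ 2) π →
      Integrable (fun x => ‖fderiv ℝ f x‖ ^ 2) π →
      ∫ x, (f x - ∫ y, f y ∂π) ^ 2 ∂π ≤ Cpi * ∫ x, ‖fderiv ℝ f x‖ ^ 2 ∂π)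
    (g : EuclideanSpace ℝ (Fin n) → ℝ) (hg : ContDiff ℝ (⊤ : ℕ∞) g)
    (hlip : LipschitzWith 1 g) (M : ℝ) (hM : 0 ≤ M) (hbd : ∀ x, |g x| ≤ M) (s : ℝ) :
    π {x | s ≤ g x} ≤ ENNReal.ofReal
      (Real.exp (1 + (Real.sqrt Cpi)⁻¹ * (∫ x, g x ∂π) - (Real.sqrt Cpi)⁻¹ * s)) := by
  have hsq : 0 < Real.sqrt Cpi := Real.sqrt_pos.2 hCpi
  set lam : ℝ := (Real.sqrt Cpi)⁻¹ with hlamdef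
  have hlam : 0 < lam := inv_pos.2 hsq
  set I : ℝ := ∫ x, g x ∂π with hI
  have hherbst := aux_herbst n π Cpi hCpi hPI g hg hlip M hM hbd
  have hgc : Continuous g := hlip.continuous
  have hF : Integrable (fun x => Real.exp (lam * g x)) π := by
    refine aux_integrable_of_bdd (Real.continuous_exp.comp (continuous_const.mul hgc))
      (Real.exp (lam * M)) fun x => ?_
    rw [abs_of_pos (Real.exp_pos _), Real.exp_le_exp]
    exact mul_le_mul_of_nonneg_left ((abs_le.1 (hbd x)).2) hlam.le
  have hsetEq : {x | s ≤ g x} = {x | Real.exp (lam * s) ≤ Real.exp (lam * g x)} := by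
    ext x
    simp only [Set.mem_setOf_eq, Real.exp_le_exp]
    exact (mul_le_mul_iff_right₀ hlam).symm
  have hmark := mul_meas_ge_le_integral_of_nonneg
    (ae_of_all π fun x => (Real.exp_pos (lam * g x)).le) hF (Real.exp (lam * s))
  have htoReal : (π {x | s ≤ g x}).toReal ≤ Real.exp (1 + lam * I - lam * s) := by
    rw [hsetEq]
    have h2 : (π {x | Real.exp (lam * s) ≤ Real.exp (lam * g x)}).toReal ≤
        (∫ x, Real.exp (lam * g x) ∂π) / Real.exp (lam * s) := by
      rw [le_div_iff₀ (Real.exp_pos _)]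
      simp only [measureReal_def] at hmark
      linarith [hmark]
    refine h2.trans ?_
    rw [div_le_iff₀ (Real.exp_pos _), ← Real.exp_add]
    refine hherbst.trans ?_
    rw [Real.exp_le_exp]
    ring_nf
    exact le_refl _
  calc π {x | s ≤ g x} = ENNReal.ofReal ((π {x | s ≤ g x}).toReal) :=
        (ENNReal.ofReal_toReal (measure_ne_top _ _)).symm
    _ ≤ _ := ENNReal.ofReal_le_ofReal htoReal

theorem stmt12 (n : ℕ) (π : Measure (EuclideanSpace ℝ (Fin n))) [IsProbabilityMeasure π]
    (Cpi : ℝ) (hCpi : 0 < Cpi)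
    -- Poincaré inequality with constant `Cpi`
    (hPI : ∀ f : EuclideanSpace ℝ (Fin n) → ℝ, Differentiable ℝ f →
      Integrable f π → Integrable (fun x => f x ^ 2) π →
      Integrable (fun x => ‖fderiv ℝ f x‖ ^ 2) π →
      ∫ x, (f x - ∫ y, f y ∂π) ^ 2 ∂π ≤ Cpi * ∫ x, ‖fderiv ℝ f x‖ ^ 2 ∂π) :
    ∀ f : EuclideanSpace ℝ (Fin n) → ℝ, LipschitzWith 1 f → Integrable f π →
      ∀ t : ℝ, 0 ≤ t →
        π {x | t ≤ f x - ∫ y, f y ∂π} ≤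
          ENNReal.ofReal (3 * Real.exp (-t / Real.sqrt Cpi)) := by
  intro f hf hfint t _ht
  have hsq : 0 < Real.sqrt Cpi := Real.sqrt_pos.2 hCpi
  set lam : ℝ := (Real.sqrt Cpi)⁻¹ with hlamdef
  have hlam : 0 < lam := inv_pos.2 hsq
  set I : ℝ := ∫ y, f y ∂π with hI
  -- truncations
  set fm : ℕ → EuclideanSpace ℝ (Fin n) → ℝ :=
    fun m x => max (-(m:ℝ)) (min (f x) m) with hfm
  have hfmlip : ∀ m, LipschitzWith 1 (fm m) := fun m => (hf.min_const _).const_max _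
  have hfmbd : ∀ m x, |fm m x| ≤ (m:ℝ) := by
    intro m x
    rw [abs_le]
    constructor
    · exact le_trans (neg_le_neg (le_refl _)) (le_max_left _ _)
    · exact max_le (neg_le_self (Nat.cast_nonneg m)) (le_trans (min_le_right _ _) (le_refl _))
  have hfmabs : ∀ m x, |fm m x| ≤ |f x| := by
    intro m x
    rw [abs_le]
    constructor
    · refine le_trans (le_min (neg_abs_le (f x)) ?_) (le_max_right _ _)
      exact le_trans (neg_nonpos.2 (abs_nonneg _)) (Nat.cast_nonneg m)
    · exact max_le ((neg_nonpos.2 (Nat.cast_nonneg m)).trans (abs_nonneg _))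
        ((min_le_left _ _).trans (le_abs_self _))
  have hfmcont : ∀ m, Continuous (fm m) := fun m => (hfmlip m).continuous
  have hfmint : ∀ m, Integrable (fm m) π := fun m =>
    aux_integrable_of_bdd (hfmcont m) _ (hfmbd m)
  -- mollified truncations
  have hεpos : ∀ m : ℕ, (0:ℝ) < 1 / (m + 1) := fun m => by positivity
  choose g hgsmooth hglip hgclose using fun m : ℕ =>
    aux_mollify (fm m) (hfmlip m) (1 / (m + 1)) (hεpos m)
  have hgbd : ∀ m x, |g m x| ≤ (m:ℝ) + 1 := by
    intro m x
    have h1 := hgclose m x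
    have h2 := hfmbd m x
    have h3 : 1 / ((m:ℝ) + 1) ≤ 1 := by
      rw [div_le_one (by positivity)]
      simp
    calc |g m x| = |(g m x - fm m x) + fm m x| := by ring_nf
      _ ≤ |g m x - fm m x| + |fm m x| := abs_add_le _ _
      _ ≤ 1 / ((m:ℝ) + 1) + (m:ℝ) := add_le_add h1 h2
      _ ≤ (m:ℝ) + 1 := by linarith
  have hgcont : ∀ m, Continuous (g m) := fun m => (hglip m).continuous
  have hgint : ∀ m, Integrable (g m) π := fun m =>
    aux_integrable_of_bdd (hgcont m) _ (hgbd m)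
  set J : ℕ → ℝ := fun m => ∫ x, g m x ∂π with hJ
  set sm : ℕ → ℝ := fun m => min (I + t) m - 1 / (m + 1) with hsm
  -- the tail bound for each m
  have hbound : ∀ m : ℕ, π {x | t ≤ f x - I} ≤
      ENNReal.ofReal (Real.exp (1 + lam * J m - lam * sm m)) := by
    intro m
    refine le_trans (measure_mono ?_) (aux_markov n π Cpi hCpi hPI (g m) (hgsmooth m)
      (hglip m) ((m:ℝ) + 1) (by positivity) (hgbd m) (sm m))
    intro x hx
    simp only [Set.mem_setOf_eq] at hx ⊢
    have h1 : I + t ≤ f x := by linarith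
    have h2 : min (I + t) m ≤ fm m x := by
      refine le_trans ?_ (le_max_right _ _)
      exact min_le_min h1 (le_refl _)
    have h3 := (abs_le.1 (hgclose m x)).1
    rw [hsm]
    simp only
    linarith
  -- limits
  have hεlim : Tendsto (fun m : ℕ => 1 / ((m:ℝ) + 1)) atTop (𝓝 0) :=
    tendsto_one_div_add_atTop_nhds_zero_nat
  have hJlim : Tendsto J atTop (𝓝 I) := by
    have hfmIlim : Tendsto (fun m => ∫ x, fm m x ∂π) atTop (𝓝 I) := by
      refine tendsto_integral_of_dominated_convergence (fun x => |f x|)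
        (fun m => (hfmcont m).aestronglyMeasurable) hfint.abs
        (fun m => ae_of_all π fun x => by
          simpa [Real.norm_eq_abs] using hfmabs m x)
        (ae_of_all π fun x => ?_)
      refine tendsto_atTop_of_eventually_const (i₀ := ⌈|f x|⌉₊) fun m hm => ?_
      have hmx : |f x| ≤ (m:ℝ) := le_trans (Nat.le_ceil _) (by exact_mod_cast hm)
      rw [hfm]
      simp only
      rw [min_eq_left ((le_abs_self _).trans hmx), max_eq_right]
      linarith [(abs_le.1 hmx).1, neg_abs_le (f x)]
    have hJfm : ∀ m, |J m - ∫ x, fm m x ∂π| ≤ 1 / ((m:ℝ) + 1) := by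
      intro m
      rw [hJ]
      simp only
      rw [← integral_sub (hgint m) (hfmint m)]
      calc |∫ x, (g m x - fm m x) ∂π| ≤ ∫ x, |g m x - fm m x| ∂π := by
            simpa [Real.norm_eq_abs] using
              norm_integral_le_integral_norm (fun x => g m x - fm m x) (μ := π)
        _ ≤ ∫ _x, 1 / ((m:ℝ) + 1) ∂π := by
            refine integral_mono ((hgint m).sub (hfmint m)).abs (integrable_const _)
              fun x => hgclose m x
        _ = 1 / ((m:ℝ) + 1) := by simp
    refine tendsto_of_tendsto_of_tendsto_of_le_of_le
      (g := fun m => (∫ x, fm m x ∂π) - 1 / ((m:ℝ) + 1))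
      (h := fun m => (∫ x, fm m x ∂π) + 1 / ((m:ℝ) + 1)) ?_ ?_ ?_ ?_
    · simpa using hfmIlim.sub hεlim
    · simpa using hfmIlim.add hεlim
    · intro m
      have := (abs_le.1 (hJfm m)).1
      linarith
    · intro m
      have := (abs_le.1 (hJfm m)).2
      linarith
  have hsmlim : Tendsto sm atTop (𝓝 (I + t)) := by
    have hminlim : Tendsto (fun m : ℕ => min (I + t) (m:ℝ)) atTop (𝓝 (I + t)) := by
      refine tendsto_atTop_of_eventually_const (i₀ := ⌈I + t⌉₊) fun m hm => ?_
      exact min_eq_left ((Nat.le_ceil _).trans (by exact_mod_cast hm))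
    rw [hsm]
    simpa using hminlim.sub hεlim
  have hexplim : Tendsto (fun m => ENNReal.ofReal (Real.exp (1 + lam * J m - lam * sm m)))
      atTop (𝓝 (ENNReal.ofReal (Real.exp (1 + lam * I - lam * (I + t))))) := by
    refine (ENNReal.continuous_ofReal.tendsto _).comp ?_
    refine (Real.continuous_exp.tendsto _).comp ?_
    have h1 : Tendsto (fun m => 1 + lam * J m) atTop (𝓝 (1 + lam * I)) :=
      tendsto_const_nhds.add (hJlim.const_mul lam)
    have h2 : Tendsto (fun m => lam * sm m) atTop (𝓝 (lam * (I + t))) :=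
      hsmlim.const_mul lam
    exact h1.sub h2
  have hlim := ge_of_tendsto hexplim (Filter.Eventually.of_forall hbound)
  refine hlim.trans (ENNReal.ofReal_le_ofReal ?_)
  have heq : 1 + lam * I - lam * (I + t) = 1 + -t / Real.sqrt Cpi := by
    rw [hlamdef]
    field_simp
    ring
  rw [heq, Real.exp_add]
  have h3 : Real.exp 1 ≤ 3 := by
    have := Real.exp_one_lt_d9
    linarith
  exact mul_le_mul_of_nonneg_right h3 (Real.exp_pos _).le
end
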